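/- There is a bijection between (isomorphism classes of) XY-graphs on n vertices and (isomorphism classes of) unbalanced split graphs on n + 1 vertices, given by adding a new vertex v, setting K = Y ∪ {v}, S = X, and joining all pairs of distinct vertices of K by edges. -/

import Mathlib

open SimpleGraph
attribute [local instance] Classical.propDecidable

variable {V : Type*} [Fintype V] [DecidableEq V]

/-- A set of vertices is stable (independent) if no two of its elements are adjacent. -/
def IsStableSet (G : SimpleGraph V) (s : Set V) : Prop :=
  s.Pairwise fun a b => ¬ G.Adj a b

/-- The clique number ω(G). -/
noncomputable def omegaNum (G : SimpleGraph V) : ℕ :=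
  Finset.univ.sup fun s : Finset V => if G.IsClique (s : Set V) then s.card else 0

/-- The independence number α(G). -/
noncomputable def alphaNum (G : SimpleGraph V) : ℕ :=
  Finset.univ.sup fun s : Finset V => if IsStableSet G (s : Set V) then s.card else 0

/-- A KS-partition of `G`: a partition of the vertex set into a clique `K` and a stable set `S`. -/
def IsKSPartition (G : SimpleGraph V) (K S : Finset V) : Prop :=
  Disjoint K S ∧ K ∪ S = Finset.univ ∧ G.IsClique (K : Set V) ∧ IsStableSet G (S : Set V)

/-- `G` is a split graph. -/
def IsSplit (G : SimpleGraph V) : Prop := ∃ K S : Finset V, IsKSPartition G K S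

/-- A split graph is balanced if it has a KS-partition with `|K| = ω(G)` and `|S| = α(G)`. -/
def IsBalanced (G : SimpleGraph V) : Prop :=
  ∃ K S : Finset V, IsKSPartition G K S ∧ K.card = omegaNum G ∧ S.card = alphaNum G

set_option linter.unusedSectionVars false

namespace XYAux

lemma part_mem {G : SimpleGraph V} {K S : Finset V} (h : IsKSPartition G K S) (x : V) :
    x ∈ S ↔ x ∉ K := by
  obtain ⟨hd, hu, -, -⟩ := h
  constructor
  · intro hs hk
    exact (Finset.disjoint_left.mp hd) hk hs
  · intro hk
    have : x ∈ K ∪ S := hu ▸ Finset.mem_univ x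
    rcases Finset.mem_union.mp this with h | h
    · exact absurd h hk
    · exact h

lemma omega_ge {G : SimpleGraph V} {C : Finset V} (hC : G.IsClique (C : Set V)) :
    C.card ≤ omegaNum G := by
  have := Finset.le_sup (f := fun s : Finset V => if G.IsClique (s : Set V) then s.card else 0)
    (Finset.mem_univ C)
  simp only [if_pos hC] at this
  exact this

lemma alpha_ge {G : SimpleGraph V} {C : Finset V} (hC : IsStableSet G (C : Set V)) :
    C.card ≤ alphaNum G := by
  have := Finset.le_sup (f := fun s : Finset V => if IsStableSet G (s : Set V) then s.card else 0)
    (Finset.mem_univ C)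
  simp only [if_pos hC] at this
  exact this

lemma exists_max_clique (G : SimpleGraph V) :
    ∃ C : Finset V, G.IsClique (C : Set V) ∧ C.card = omegaNum G := by
  obtain ⟨C, -, hC⟩ := Finset.exists_mem_eq_sup Finset.univ
    (Finset.univ_nonempty) (fun s : Finset V => if G.IsClique (s : Set V) then s.card else 0)
  by_cases h : G.IsClique (C : Set V)
  · exact ⟨C, h, by rw [omegaNum, hC, if_pos h]⟩
  · refine ⟨∅, by simp [SimpleGraph.IsClique], ?_⟩
    rw [omegaNum, hC, if_neg h, Finset.card_empty]

lemma exists_max_stable (G : SimpleGraph V) :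
    ∃ C : Finset V, IsStableSet G (C : Set V) ∧ C.card = alphaNum G := by
  obtain ⟨C, -, hC⟩ := Finset.exists_mem_eq_sup Finset.univ
    (Finset.univ_nonempty) (fun s : Finset V => if IsStableSet G (s : Set V) then s.card else 0)
  by_cases h : IsStableSet G (C : Set V)
  · exact ⟨C, h, by rw [alphaNum, hC, if_pos h]⟩
  · refine ⟨∅, by simp [IsStableSet], ?_⟩
    rw [alphaNum, hC, if_neg h, Finset.card_empty]

lemma inter_clique_stable_le_one {G : SimpleGraph V} {C S : Finset V}
    (hC : G.IsClique (C : Set V)) (hS : IsStableSet G (S : Set V)) :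
    (C ∩ S).card ≤ 1 := by
  rw [Finset.card_le_one]
  intro a ha b hb
  by_contra hne
  have hadj := hC (Finset.mem_coe.mpr (Finset.mem_inter.mp ha).1)
    (Finset.mem_coe.mpr (Finset.mem_inter.mp hb).1) hne
  exact hS (Finset.mem_coe.mpr (Finset.mem_inter.mp ha).2)
    (Finset.mem_coe.mpr (Finset.mem_inter.mp hb).2) hne hadj

lemma card_le_parts {K S : Finset V} (hu : K ∪ S = Finset.univ) (C : Finset V) :
    C.card ≤ (C ∩ K).card + (C ∩ S).card := by
  have : C ⊆ (C ∩ K) ∪ (C ∩ S) := by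
    intro x hx
    have : x ∈ K ∪ S := hu ▸ Finset.mem_univ x
    rcases Finset.mem_union.mp this with h | h
    · exact Finset.mem_union_left _ (Finset.mem_inter.mpr ⟨hx, h⟩)
    · exact Finset.mem_union_right _ (Finset.mem_inter.mpr ⟨hx, h⟩)
  calc C.card ≤ ((C ∩ K) ∪ (C ∩ S)).card := Finset.card_le_card this
    _ ≤ _ := Finset.card_union_le _ _

lemma omega_le {G : SimpleGraph V} {K S : Finset V} (h : IsKSPartition G K S) :
    omegaNum G ≤ K.card + 1 := by
  apply Finset.sup_le
  intro C _
  split_ifs with hC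
  · calc C.card ≤ (C ∩ K).card + (C ∩ S).card := card_le_parts h.2.1 C
      _ ≤ K.card + 1 := add_le_add (Finset.card_le_card (Finset.inter_subset_right))
          (inter_clique_stable_le_one hC h.2.2.2)
  · exact Nat.zero_le _

lemma alpha_le {G : SimpleGraph V} {K S : Finset V} (h : IsKSPartition G K S) :
    alphaNum G ≤ S.card + 1 := by
  apply Finset.sup_le
  intro C _
  split_ifs with hC
  · calc C.card ≤ (C ∩ S).card + (C ∩ K).card := by
          rw [add_comm]; exact card_le_parts h.2.1 C
      _ ≤ S.card + 1 := add_le_add (Finset.card_le_card (Finset.inter_subset_right))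
          (by rw [Finset.inter_comm]; exact inter_clique_stable_le_one h.2.2.1 hC)
  · exact Nat.zero_le _

lemma not_balanced_of_special {G : SimpleGraph V} {K S : Finset V}
    (h : IsKSPartition G K S) {k : V} (hk : k ∈ K) (hns : ∀ s ∈ S, ¬ G.Adj k s) :
    ¬ IsBalanced G := by
  rintro ⟨K', S', hP, hK', hS'⟩
  have hknS : k ∉ S := fun hs => (Finset.disjoint_left.mp h.1) hk hs
  have hstab : IsStableSet G ((insert k S : Finset V) : Set V) := by
    intro a ha b hb hne hadj
    simp only [Finset.coe_insert, Set.mem_insert_iff, Finset.mem_coe] at ha hb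
    rcases ha with rfl | ha
    · rcases hb with rfl | hb
      · exact hne rfl
      · exact hns b hb hadj
    · rcases hb with rfl | hb
      · exact hns a ha hadj.symm
      · exact h.2.2.2 ha hb hne hadj
  have h1 : S.card + 1 ≤ alphaNum G := by
    have := alpha_ge hstab
    rwa [Finset.card_insert_of_notMem hknS] at this
  have h2 : K.card ≤ omegaNum G := omega_ge h.2.2.1
  have hc : K.card + S.card = Fintype.card V := by
    rw [← Finset.card_union_of_disjoint h.1, h.2.1, Finset.card_univ]
  have hc' : K'.card + S'.card = Fintype.card V := by
    rw [← Finset.card_union_of_disjoint hP.1, hP.2.1, Finset.card_univ]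
  omega

end XYAux

namespace XYAux2
open XYAux

set_option linter.unusedSectionVars false
variable {V : Type*} [Fintype V] [DecidableEq V]

lemma exists_special {G : SimpleGraph V} (hsplit : IsSplit G) (hunbal : ¬ IsBalanced G) :
    ∃ K S : Finset V, IsKSPartition G K S ∧ ∃ k ∈ K, ∀ s ∈ S, ¬ G.Adj k s := by
  obtain ⟨K, S, hP⟩ := hsplit
  have step1 : ∃ K₀ S₀ : Finset V, IsKSPartition G K₀ S₀ ∧ K₀.card = omegaNum G := by
    by_cases hK : K.card = omegaNum G
    · exact ⟨K, S, hP, hK⟩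
    · have hlt : K.card < omegaNum G := lt_of_le_of_ne (omega_ge hP.2.2.1) hK
      obtain ⟨C, hC, hCcard⟩ := exists_max_clique G
      have hCS1 : (C ∩ S).card ≤ 1 := inter_clique_stable_le_one hC hP.2.2.2
      have hle : C.card ≤ (C ∩ K).card + (C ∩ S).card := card_le_parts hP.2.1 C
      have hCK : (C ∩ K).card ≤ K.card := Finset.card_le_card Finset.inter_subset_right
      have hKsub : K ⊆ C := by
        have h1 : (C ∩ K).card = K.card := by omega
        have h2 := Finset.eq_of_subset_of_card_le
          (Finset.inter_subset_right : C ∩ K ⊆ K) (le_of_eq h1.symm)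
        intro x hx
        rw [← h2] at hx
        exact (Finset.mem_inter.mp hx).1
      have hCS : (C ∩ S).card = 1 := by omega
      obtain ⟨s, hs⟩ := Finset.card_eq_one.mp hCS
      have hsC : s ∈ C := (Finset.mem_inter.mp (hs ▸ Finset.mem_singleton_self s)).1
      have hsS : s ∈ S := (Finset.mem_inter.mp (hs ▸ Finset.mem_singleton_self s)).2
      have hsnK : s ∉ K := fun h => (Finset.disjoint_left.mp hP.1) h hsS
      have homle : omegaNum G ≤ K.card + 1 := omega_le hP
      have hCeq : C = insert s K := by
        apply (Finset.eq_of_subset_of_card_le ?_ ?_).symm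
        · intro x hx
          rcases Finset.mem_insert.mp hx with rfl | hx
          · exact hsC
          · exact hKsub hx
        · rw [Finset.card_insert_of_notMem hsnK]
          omega
      refine ⟨insert s K, S.erase s, ⟨?_, ?_, ?_, ?_⟩, ?_⟩
      · rw [Finset.disjoint_left]
        intro x hx hx'
        rcases Finset.mem_insert.mp hx with rfl | hx
        · exact (Finset.mem_erase.mp hx').1 rfl
        · exact (Finset.disjoint_left.mp hP.1) hx (Finset.mem_erase.mp hx').2
      · ext x
        simp only [Finset.mem_union, Finset.mem_insert, Finset.mem_erase, Finset.mem_univ,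
          iff_true]
        by_cases hxs : x = s
        · exact Or.inl (Or.inl hxs)
        · have : x ∈ K ∪ S := hP.2.1 ▸ Finset.mem_univ x
          rcases Finset.mem_union.mp this with h | h
          · exact Or.inl (Or.inr h)
          · exact Or.inr ⟨hxs, h⟩
      · rw [← hCeq]; exact hC
      · intro a ha b hb hne
        exact hP.2.2.2 (Finset.mem_coe.mpr (Finset.mem_erase.mp ha).2)
          (Finset.mem_coe.mpr (Finset.mem_erase.mp hb).2) hne
      · rw [Finset.card_insert_of_notMem hsnK]
        omega
  obtain ⟨K₀, S₀, hP₀, hK₀⟩ := step1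
  have hSne : S₀.card ≠ alphaNum G := fun h => hunbal ⟨K₀, S₀, hP₀, hK₀, h⟩
  have hSle : S₀.card ≤ alphaNum G := alpha_ge hP₀.2.2.2
  have hSla : alphaNum G ≤ S₀.card + 1 := alpha_le hP₀
  obtain ⟨I, hI, hIcard⟩ := exists_max_stable G
  have hIK1 : (I ∩ K₀).card ≤ 1 := by
    rw [Finset.inter_comm]; exact inter_clique_stable_le_one hP₀.2.2.1 hI
  have hle : I.card ≤ (I ∩ S₀).card + (I ∩ K₀).card := by
    have := card_le_parts hP₀.2.1 I
    omega
  have hISle : (I ∩ S₀).card ≤ S₀.card := Finset.card_le_card Finset.inter_subset_right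
  have hIS : (I ∩ S₀).card = S₀.card := by omega
  have hSsub : S₀ ⊆ I := by
    have h2 := Finset.eq_of_subset_of_card_le
      (Finset.inter_subset_right : I ∩ S₀ ⊆ S₀) (le_of_eq hIS.symm)
    intro x hx; rw [← h2] at hx; exact (Finset.mem_inter.mp hx).1
  have hIK : (I ∩ K₀).card = 1 := by omega
  obtain ⟨k, hk⟩ := Finset.card_eq_one.mp hIK
  have hkI : k ∈ I := (Finset.mem_inter.mp (hk ▸ Finset.mem_singleton_self k)).1
  have hkK : k ∈ K₀ := (Finset.mem_inter.mp (hk ▸ Finset.mem_singleton_self k)).2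
  refine ⟨K₀, S₀, hP₀, k, hkK, ?_⟩
  intro s hs hadj
  have hsk : s ≠ k := fun h => (Finset.disjoint_left.mp hP₀.1) (h ▸ hkK) hs
  exact hI (Finset.mem_coe.mpr hkI) (Finset.mem_coe.mpr (hSsub hs)) hsk.symm hadj

lemma swap_lemma {G : SimpleGraph V} {K₁ S₁ K₂ S₂ : Finset V}
    (h₁ : IsKSPartition G K₁ S₁) (h₂ : IsKSPartition G K₂ S₂)
    {k₁ k₂ : V} (hk₁ : k₁ ∈ K₁) (hk₂ : k₂ ∈ K₂)
    (hn₁ : ∀ s ∈ S₁, ¬ G.Adj k₁ s) (hn₂ : ∀ s ∈ S₂, ¬ G.Adj k₂ s) :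
    (∀ x, x ∈ S₁ ↔ Equiv.swap k₁ k₂ x ∈ S₂) ∧
    (∀ s ∈ S₁, ∀ c ∈ K₁, c ≠ k₁ →
      (G.Adj s c ↔ G.Adj (Equiv.swap k₁ k₂ s) (Equiv.swap k₁ k₂ c))) := by
  have hk1nS1 : k₁ ∉ S₁ := fun h => (part_mem h₁ k₁).mp h hk₁
  have hk2nS2 : k₂ ∉ S₂ := fun h => (part_mem h₂ k₂).mp h hk₂
  by_cases hkk : k₂ ∈ K₁
  · have hk1K2 : k₁ ∈ K₂ := by
      by_cases he : k₁ = k₂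
      · exact he ▸ hk₂
      · by_contra h
        exact hn₂ k₁ ((part_mem h₂ k₁).mpr h)
          (h₁.2.2.1 (Finset.mem_coe.mpr hkk) (Finset.mem_coe.mpr hk₁) fun h' => he h'.symm)
    have hKeq : K₁ = K₂ := by
      apply Finset.Subset.antisymm
      · intro x hx
        by_contra h
        have hxk2 : x ≠ k₂ := fun h' => h (h' ▸ hk₂)
        exact hn₂ x ((part_mem h₂ x).mpr h)
          (h₁.2.2.1 (Finset.mem_coe.mpr hkk) (Finset.mem_coe.mpr hx) hxk2.symm)
      · intro x hx
        by_contra h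
        have hxk1 : x ≠ k₁ := fun h' => h (h' ▸ hk₁)
        exact hn₁ x ((part_mem h₁ x).mpr h)
          (h₂.2.2.1 (Finset.mem_coe.mpr hk1K2) (Finset.mem_coe.mpr hx) hxk1.symm)
    have hSeq : S₂ = S₁ := by
      ext x; rw [part_mem h₁, part_mem h₂, hKeq]
    subst hSeq
    have hk2nS1 : k₂ ∉ S₂ := fun h => (part_mem h₁ k₂).mp h hkk
    constructor
    · intro x
      rcases eq_or_ne x k₁ with rfl | hx1
      · rw [Equiv.swap_apply_left]
        exact ⟨fun h => absurd h hk1nS1, fun h => absurd h hk2nS1⟩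
      · rcases eq_or_ne x k₂ with rfl | hx2
        · rw [Equiv.swap_apply_right]
          exact ⟨fun h => absurd h hk2nS1, fun h => absurd h hk1nS1⟩
        · rw [Equiv.swap_apply_of_ne_of_ne hx1 hx2]
    · intro s hs c hc hck1
      have hs1 : s ≠ k₁ := fun h => hk1nS1 (h ▸ hs)
      have hs2 : s ≠ k₂ := fun h => hk2nS1 (h ▸ hs)
      rw [Equiv.swap_apply_of_ne_of_ne hs1 hs2]
      rcases eq_or_ne c k₂ with rfl | hck2
      · rw [Equiv.swap_apply_right]
        constructor
        · intro h; exact absurd h.symm (hn₂ s hs)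
        · intro h; exact absurd h.symm (hn₁ s hs)
      · rw [Equiv.swap_apply_of_ne_of_ne hck1 hck2]
  · have hk2S1 : k₂ ∈ S₁ := (part_mem h₁ k₂).mpr hkk
    have hne : k₁ ≠ k₂ := fun h => hkk (h ▸ hk₁)
    have hk1K2 : k₁ ∉ K₂ := by
      intro h
      exact hn₁ k₂ hk2S1
        ((h₂.2.2.1 (Finset.mem_coe.mpr h) (Finset.mem_coe.mpr hk₂) hne))
    have hk1S2 : k₁ ∈ S₂ := (part_mem h₂ k₁).mpr hk1K2
    have hC : ∀ x, x ≠ k₁ → x ≠ k₂ → (x ∈ K₁ ↔ x ∈ K₂) := by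
      intro x hx1 hx2
      constructor
      · intro hx
        by_contra h
        exact h₂.2.2.2 (Finset.mem_coe.mpr hk1S2) (Finset.mem_coe.mpr ((part_mem h₂ x).mpr h))
          hx1.symm (h₁.2.2.1 (Finset.mem_coe.mpr hk₁) (Finset.mem_coe.mpr hx) (Ne.symm hx1))
      · intro hx
        by_contra h
        exact h₁.2.2.2 (Finset.mem_coe.mpr hk2S1) (Finset.mem_coe.mpr ((part_mem h₁ x).mpr h))
          hx2.symm (h₂.2.2.1 (Finset.mem_coe.mpr hk₂) (Finset.mem_coe.mpr hx) (Ne.symm hx2))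
    constructor
    · intro x
      rcases eq_or_ne x k₁ with rfl | hx1
      · rw [Equiv.swap_apply_left]
        exact ⟨fun h => absurd h hk1nS1, fun h => absurd h hk2nS2⟩
      · rcases eq_or_ne x k₂ with rfl | hx2
        · rw [Equiv.swap_apply_right]
          exact ⟨fun _ => hk1S2, fun _ => hk2S1⟩
        · rw [Equiv.swap_apply_of_ne_of_ne hx1 hx2, part_mem h₁, part_mem h₂, hC x hx1 hx2]
    · intro s hs c hc hck1
      have hck2 : c ≠ k₂ := fun h => hkk (h ▸ hc)
      rw [Equiv.swap_apply_of_ne_of_ne hck1 hck2]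
      have hcK2 : c ∈ K₂ := (hC c hck1 hck2).mp hc
      have hs1 : s ≠ k₁ := fun h => hk1nS1 (h ▸ hs)
      rcases eq_or_ne s k₂ with rfl | hs2
      · rw [Equiv.swap_apply_right]
        constructor
        · intro _
          exact h₁.2.2.1 (Finset.mem_coe.mpr hk₁) (Finset.mem_coe.mpr hc) (Ne.symm hck1)
        · intro _
          exact h₂.2.2.1 (Finset.mem_coe.mpr hk₂) (Finset.mem_coe.mpr hcK2) (Ne.symm hck2)
      · rw [Equiv.swap_apply_of_ne_of_ne hs1 hs2]

end XYAux2

/-- An XY-graph on `Fin n`: a bipartite graph with a specified bipartition, whose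
distinguished part is `X` (the other part `Y` being the complement of `X`). -/
structure XYGraph (n : ℕ) where
  G : SimpleGraph (Fin n)
  X : Finset (Fin n)
  bip : ∀ u v : Fin n, G.Adj u v → (u ∈ X ∧ v ∉ X) ∨ (u ∉ X ∧ v ∈ X)

/-- No vertex of `Y` (the complement of `X`) is isolated. -/
def NoIsolateY {n : ℕ} (A : XYGraph n) : Prop :=
  ∀ v : Fin n, v ∉ A.X → ∃ u ∈ A.X, A.G.Adj u v

/-- `X` contains a universal vertex: one adjacent to every vertex of `Y`. -/
def HasUniversalX {n : ℕ} (A : XYGraph n) : Prop :=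
  ∃ x ∈ A.X, ∀ y : Fin n, y ∉ A.X → A.G.Adj x y

/-- Isomorphism of XY-graphs: a graph isomorphism preserving the distinguished part. -/
def XYIsoRel (n : ℕ) (A B : XYGraph n) : Prop :=
  ∃ e : A.G ≃g B.G, ∀ v : Fin n, v ∈ A.X ↔ e v ∈ B.X

/-- Isomorphism of unbalanced split graphs on `Fin (n+1)`. -/
def USplitIsoRel (n : ℕ)
    (G H : {G : SimpleGraph (Fin (n + 1)) // IsSplit G ∧ ¬ IsBalanced G}) : Prop :=
  Nonempty (G.1 ≃g H.1)

namespace XYF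
open XYAux XYAux2

variable {n : ℕ}

def KF (A : XYGraph n) : Finset (Fin (n + 1)) :=
  insert (Fin.last n) ((A.Xᶜ).image Fin.castSucc)

def SF (A : XYGraph n) : Finset (Fin (n + 1)) := A.X.image Fin.castSucc

def F (A : XYGraph n) : SimpleGraph (Fin (n + 1)) where
  Adj a b := a ≠ b ∧ ((a ∈ KF A ∧ b ∈ KF A) ∨
    ∃ u v : Fin n, A.G.Adj u v ∧ a = Fin.castSucc u ∧ b = Fin.castSucc v)
  symm := by
    constructor
    rintro a b ⟨hne, h⟩
    refine ⟨hne.symm, ?_⟩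
    rcases h with ⟨h1, h2⟩ | ⟨u, v, h, rfl, rfl⟩
    · exact Or.inl ⟨h2, h1⟩
    · exact Or.inr ⟨v, u, h.symm, rfl, rfl⟩
  loopless := ⟨fun a h => h.1 rfl⟩

lemma cs_mem_KF {A : XYGraph n} {u : Fin n} : Fin.castSucc u ∈ KF A ↔ u ∉ A.X := by
  simp only [KF, Finset.mem_insert, Finset.mem_image]
  constructor
  · rintro (h | ⟨v, hv, h⟩)
    · exact absurd h (Fin.castSucc_lt_last u).ne
    · rw [← Fin.castSucc_inj.mp h]; exact Finset.mem_compl.mp hv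
  · intro h
    exact Or.inr ⟨u, Finset.mem_compl.mpr h, rfl⟩

lemma last_mem_KF {A : XYGraph n} : Fin.last n ∈ KF A := Finset.mem_insert_self _ _

lemma cs_mem_SF {A : XYGraph n} {u : Fin n} : Fin.castSucc u ∈ SF A ↔ u ∈ A.X := by
  simp only [SF, Finset.mem_image]
  constructor
  · rintro ⟨v, hv, h⟩
    rwa [← Fin.castSucc_inj.mp h]
  · intro h; exact ⟨u, h, rfl⟩

lemma last_not_mem_SF {A : XYGraph n} : Fin.last n ∉ SF A := by
  simp only [SF, Finset.mem_image]
  rintro ⟨v, -, h⟩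
  exact (Fin.castSucc_lt_last v).ne h

lemma F_adj_cs_cs {A : XYGraph n} {u w : Fin n} :
    (F A).Adj (Fin.castSucc u) (Fin.castSucc w) ↔
      (u ∉ A.X ∧ w ∉ A.X ∧ u ≠ w) ∨ A.G.Adj u w := by
  constructor
  · rintro ⟨hne, ⟨h1, h2⟩ | ⟨a, b, h, ha, hb⟩⟩
    · exact Or.inl ⟨cs_mem_KF.mp h1, cs_mem_KF.mp h2, fun h => hne (by rw [h])⟩
    · rw [Fin.castSucc_inj.mp ha, Fin.castSucc_inj.mp hb]
      exact Or.inr h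
  · rintro (⟨h1, h2, hne⟩ | h)
    · exact ⟨fun h => hne (Fin.castSucc_inj.mp h), Or.inl ⟨cs_mem_KF.mpr h1, cs_mem_KF.mpr h2⟩⟩
    · exact ⟨fun h' => h.ne (Fin.castSucc_inj.mp h'), Or.inr ⟨u, w, h, rfl, rfl⟩⟩

lemma F_adj_last_cs {A : XYGraph n} {w : Fin n} :
    (F A).Adj (Fin.last n) (Fin.castSucc w) ↔ w ∉ A.X := by
  constructor
  · rintro ⟨hne, ⟨h1, h2⟩ | ⟨a, b, h, ha, hb⟩⟩
    · exact cs_mem_KF.mp h2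
    · exact absurd ha (Fin.castSucc_lt_last a).ne'
  · intro h
    exact ⟨(Fin.castSucc_lt_last w).ne', Or.inl ⟨last_mem_KF, cs_mem_KF.mpr h⟩⟩

lemma F_part (A : XYGraph n) : IsKSPartition (F A) (KF A) (SF A) := by
  refine ⟨?_, ?_, ?_, ?_⟩
  · rw [Finset.disjoint_left]
    intro x hx hx'
    induction x using Fin.lastCases with
    | last => exact last_not_mem_SF hx'
    | cast u => exact (cs_mem_KF.mp hx) (cs_mem_SF.mp hx')
  · ext x
    simp only [Finset.mem_union, Finset.mem_univ, iff_true]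
    induction x using Fin.lastCases with
    | last => exact Or.inl last_mem_KF
    | cast u =>
      by_cases h : u ∈ A.X
      · exact Or.inr (cs_mem_SF.mpr h)
      · exact Or.inl (cs_mem_KF.mpr h)
  · intro a ha b hb hne
    exact ⟨hne, Or.inl ⟨Finset.mem_coe.mp ha, Finset.mem_coe.mp hb⟩⟩
  · intro a ha b hb hne hadj
    have ha' := Finset.mem_coe.mp ha
    have hb' := Finset.mem_coe.mp hb
    simp only [SF, Finset.mem_image] at ha' hb'
    obtain ⟨u, hu, rfl⟩ := ha'
    obtain ⟨w, hw, rfl⟩ := hb'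
    rcases F_adj_cs_cs.mp hadj with ⟨h1, -, -⟩ | h
    · exact h1 hu
    · rcases A.bip u w h with ⟨-, h2⟩ | ⟨h1, -⟩
      · exact h2 hw
      · exact h1 hu

lemma F_last_special (A : XYGraph n) : ∀ s ∈ SF A, ¬ (F A).Adj (Fin.last n) s := by
  intro s hs hadj
  simp only [SF, Finset.mem_image] at hs
  obtain ⟨u, hu, rfl⟩ := hs
  exact (F_adj_last_cs.mp hadj) hu

lemma F_split (A : XYGraph n) : IsSplit (F A) := ⟨KF A, SF A, F_part A⟩

lemma F_unbal (A : XYGraph n) : ¬ IsBalanced (F A) :=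
  not_balanced_of_special (F_part A) last_mem_KF (F_last_special A)

end XYF

namespace XYF
open XYAux XYAux2

variable {n : ℕ}

def extEquiv (e : Fin n ≃ Fin n) : Fin (n + 1) ≃ Fin (n + 1) where
  toFun := Fin.lastCases (Fin.last n) (fun u => (e u).castSucc)
  invFun := Fin.lastCases (Fin.last n) (fun u => (e.symm u).castSucc)
  left_inv := by
    intro x
    induction x using Fin.lastCases with
    | last => simp
    | cast u => simp
  right_inv := by
    intro x
    induction x using Fin.lastCases with
    | last => simp
    | cast u => simp

@[simp] lemma extEquiv_last (e : Fin n ≃ Fin n) : extEquiv e (Fin.last n) = Fin.last n := by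
  simp [extEquiv]

@[simp] lemma extEquiv_castSucc (e : Fin n ≃ Fin n) (u : Fin n) :
    extEquiv e (Fin.castSucc u) = Fin.castSucc (e u) := by
  simp [extEquiv]

lemma F_congr {A B : XYGraph n} (h : XYIsoRel n A B) : Nonempty (F A ≃g F B) := by
  obtain ⟨e, hX⟩ := h
  refine ⟨⟨extEquiv e.toEquiv, ?_⟩⟩
  intro a b
  induction a using Fin.lastCases with
  | last =>
    induction b using Fin.lastCases with
    | last =>
      simp only [extEquiv_last]
      exact iff_of_false ((F B).irrefl) ((F A).irrefl)
    | cast w =>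
      simp only [extEquiv_last, extEquiv_castSucc]
      rw [F_adj_last_cs, F_adj_last_cs]
      exact not_congr (hX w).symm
  | cast u =>
    induction b using Fin.lastCases with
    | last =>
      simp only [extEquiv_last, extEquiv_castSucc]
      rw [(F B).adj_comm, (F A).adj_comm, F_adj_last_cs, F_adj_last_cs]
      exact not_congr (hX u).symm
    | cast w =>
      simp only [extEquiv_castSucc]
      rw [F_adj_cs_cs, F_adj_cs_cs]
      constructor
      · rintro (⟨h1, h2, h3⟩ | h1)
        · exact Or.inl ⟨fun hh => h1 ((hX u).mp hh), fun hh => h2 ((hX w).mp hh),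
            fun hh => h3 (by rw [hh])⟩
        · exact Or.inr (e.map_adj_iff.mp h1)
      · rintro (⟨h1, h2, h3⟩ | h1)
        · refine Or.inl ⟨fun hh => h1 ((hX u).mpr hh), fun hh => h2 ((hX w).mpr hh), ?_⟩
          intro hh
          exact h3 (e.toEquiv.injective (by exact_mod_cast hh))
        · exact Or.inr (e.map_adj_iff.mpr h1)

lemma F_surj (H : SimpleGraph (Fin (n + 1))) (hs : IsSplit H) (hu : ¬ IsBalanced H) :
    ∃ A : XYGraph n, Nonempty (F A ≃g H) := by
  classical
  obtain ⟨K, S, hP, k, hk, hns⟩ := exists_special hs hu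
  set σ := Equiv.swap k (Fin.last n) with hσ
  set c : Fin n → Fin (n + 1) := fun u => σ (Fin.castSucc u) with hc
  have hck : ∀ u, c u ≠ k := by
    intro u h
    have h2 : σ (c u) = Fin.castSucc u := Equiv.swap_apply_self _ _ _
    rw [h, Equiv.swap_apply_left] at h2
    exact (Fin.castSucc_lt_last u).ne h2.symm
  have cInj : Function.Injective c := fun u w h =>
    Fin.castSucc_injective n (σ.injective h)
  have memKS : ∀ x, x ∈ S ↔ x ∉ K := part_mem hP
  let GA : SimpleGraph (Fin n) :=
    { Adj := fun u w => H.Adj (c u) (c w) ∧ ¬ (c u ∈ K ∧ c w ∈ K)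
      symm := by constructor; rintro u w ⟨h1, h2⟩; exact ⟨h1.symm, fun hh => h2 ⟨hh.2, hh.1⟩⟩
      loopless := ⟨fun u h => H.irrefl h.1⟩ }
  have hbip : ∀ u v : Fin n, GA.Adj u v →
      (u ∈ Finset.univ.filter (fun u => c u ∈ S) ∧ v ∉ Finset.univ.filter (fun u => c u ∈ S)) ∨
      (u ∉ Finset.univ.filter (fun u => c u ∈ S) ∧ v ∈ Finset.univ.filter (fun u => c u ∈ S)) := by
    rintro u v ⟨hadj, hnk⟩
    simp only [Finset.mem_filter, Finset.mem_univ, true_and]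
    have hnotboth : ¬ (c u ∈ S ∧ c v ∈ S) := by
      rintro ⟨h1, h2⟩
      exact hP.2.2.2 (Finset.mem_coe.mpr h1) (Finset.mem_coe.mpr h2)
        (fun hh => hadj.ne hh) hadj
    by_cases h1 : c u ∈ S
    · exact Or.inl ⟨h1, fun h2 => hnotboth ⟨h1, h2⟩⟩
    · by_cases h2 : c v ∈ S
      · exact Or.inr ⟨h1, h2⟩
      · exact absurd ⟨(memKS _).not_left.mp h1, (memKS _).not_left.mp h2⟩ hnk
  refine ⟨⟨GA, Finset.univ.filter (fun u => c u ∈ S), hbip⟩, ⟨⟨σ, ?_⟩⟩⟩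
  set A : XYGraph n := ⟨GA, Finset.univ.filter (fun u => c u ∈ S), hbip⟩ with hA
  have hmemX : ∀ u : Fin n, u ∈ A.X ↔ c u ∈ S := by
    intro u
    simp [hA, Finset.mem_filter]
  have hlastcase : ∀ w : Fin n, H.Adj k (c w) ↔ (F A).Adj (Fin.last n) (Fin.castSucc w) := by
    intro w
    rw [F_adj_last_cs]
    constructor
    · intro hadj hw
      exact hns (c w) ((hmemX w).mp hw) hadj
    · intro hw
      have h1 : c w ∈ K := (memKS _).not_left.mp (fun hh => hw ((hmemX w).mpr hh))
      exact hP.2.2.1 (Finset.mem_coe.mpr hk) (Finset.mem_coe.mpr h1) (Ne.symm (hck w))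
  intro a b
  induction a using Fin.lastCases with
  | last =>
    induction b using Fin.lastCases with
    | last => exact iff_of_false (H.irrefl) ((F A).irrefl)
    | cast w =>
      have : σ (Fin.last n) = k := Equiv.swap_apply_right _ _
      rw [show (σ (Fin.last n)) = k from this]
      exact hlastcase w
  | cast u =>
    induction b using Fin.lastCases with
    | last =>
      have : σ (Fin.last n) = k := Equiv.swap_apply_right _ _
      rw [H.adj_comm, (F A).adj_comm, show (σ (Fin.last n)) = k from this]
      exact hlastcase u
    | cast w =>
      rw [F_adj_cs_cs]
      constructor
      · intro hadj
        have hne : u ≠ w := fun hh => hadj.ne (by rw [hh])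
        by_cases hb : c u ∈ K ∧ c w ∈ K
        · refine Or.inl ⟨fun hh => ?_, fun hh => ?_, hne⟩
          · exact (memKS (c u)).mp ((hmemX u).mp hh) hb.1
          · exact (memKS (c w)).mp ((hmemX w).mp hh) hb.2
        · exact Or.inr ⟨hadj, hb⟩
      · rintro (⟨h1, h2, hne⟩ | ⟨h1, -⟩)
        · have hu : c u ∈ K := (memKS _).not_left.mp (fun hh => h1 ((hmemX u).mpr hh))
          have hw : c w ∈ K := (memKS _).not_left.mp (fun hh => h2 ((hmemX w).mpr hh))
          exact hP.2.2.1 (Finset.mem_coe.mpr hu) (Finset.mem_coe.mpr hw)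
            (fun hh => hne (cInj hh))
        · exact h1

lemma F_inj {A B : XYGraph n} (g : F A ≃g F B) : XYIsoRel n A B := by
  classical
  set H := F B with hH
  set K₁ : Finset (Fin (n + 1)) := (KF A).image g with hK₁
  set S₁ : Finset (Fin (n + 1)) := (SF A).image g with hS₁
  set k₁ : Fin (n + 1) := g (Fin.last n) with hk₁def
  have hmemS₁ : ∀ x, g x ∈ S₁ ↔ x ∈ SF A := by
    intro x
    simp only [hS₁, Finset.mem_image]
    constructor
    · rintro ⟨y, hy, hxy⟩
      have h2 : y = x := g.toEquiv.injective hxy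
      rwa [h2] at hy
    · intro hx; exact ⟨x, hx, rfl⟩
  have hmemK₁ : ∀ x, g x ∈ K₁ ↔ x ∈ KF A := by
    intro x
    simp only [hK₁, Finset.mem_image]
    constructor
    · rintro ⟨y, hy, hxy⟩
      have h2 : y = x := g.toEquiv.injective hxy
      rwa [h2] at hy
    · intro hx; exact ⟨x, hx, rfl⟩
  have hP₁ : IsKSPartition H K₁ S₁ := by
    refine ⟨?_, ?_, ?_, ?_⟩
    · exact (Finset.disjoint_image
        (show Function.Injective (⇑g) from g.toEquiv.injective)).mpr (F_part A).1
    · apply Finset.eq_univ_of_forall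
      intro x
      have hx : g.toEquiv.symm x ∈ KF A ∪ SF A := by
        rw [(F_part A).2.1]; exact Finset.mem_univ _
      have hgx : g (g.toEquiv.symm x) = x := g.toEquiv.apply_symm_apply x
      rcases Finset.mem_union.mp hx with h | h
      · refine Finset.mem_union_left _ ?_
        have h3 := Finset.mem_image_of_mem (⇑g) h
        rwa [hgx] at h3
      · refine Finset.mem_union_right _ ?_
        have h3 := Finset.mem_image_of_mem (⇑g) h
        rwa [hgx] at h3
    · intro x hx y hy hne
      simp only [Finset.mem_coe, hK₁, Finset.mem_image] at hx hy
      obtain ⟨x', hx', rfl⟩ := hx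
      obtain ⟨y', hy', rfl⟩ := hy
      exact g.map_adj_iff.mpr ((F_part A).2.2.1 (Finset.mem_coe.mpr hx')
        (Finset.mem_coe.mpr hy') (fun hh => hne (by rw [hh])))
    · intro x hx y hy hne hadj
      simp only [Finset.mem_coe, hS₁, Finset.mem_image] at hx hy
      obtain ⟨x', hx', rfl⟩ := hx
      obtain ⟨y', hy', rfl⟩ := hy
      exact (F_part A).2.2.2 (Finset.mem_coe.mpr hx') (Finset.mem_coe.mpr hy')
        (fun hh => hne (by rw [hh])) (g.map_adj_iff.mp hadj)
  have hk₁ : k₁ ∈ K₁ := (hmemK₁ _).mpr last_mem_KF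
  have hn₁ : ∀ s ∈ S₁, ¬ H.Adj k₁ s := by
    intro s hs hadj
    simp only [hS₁, Finset.mem_image] at hs
    obtain ⟨s', hs', rfl⟩ := hs
    exact F_last_special A s' hs' (g.map_adj_iff.mp hadj)
  obtain ⟨hSiff, hAdjiff⟩ := swap_lemma hP₁ (F_part B) hk₁ last_mem_KF hn₁ (F_last_special B)
  set φ := Equiv.swap k₁ (Fin.last n) with hφ
  set e' : Fin (n + 1) ≃ Fin (n + 1) := g.toEquiv.trans φ with he'
  have he'last : e' (Fin.last n) = Fin.last n := Equiv.swap_apply_left _ _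
  have he'cs : ∀ u : Fin n, e' (Fin.castSucc u) ≠ Fin.last n := by
    intro u h
    have := e'.injective (h.trans he'last.symm)
    exact (Fin.castSucc_lt_last u).ne this
  have hsymcs : ∀ u : Fin n, e'.symm (Fin.castSucc u) ≠ Fin.last n := by
    intro u h
    have h2 : Fin.castSucc u = e' (Fin.last n) := by rw [← h, Equiv.apply_symm_apply]
    rw [he'last] at h2
    exact (Fin.castSucc_lt_last u).ne h2
  let ε : Fin n ≃ Fin n :=
    { toFun := fun u => (e' (Fin.castSucc u)).castPred (he'cs u)
      invFun := fun u => (e'.symm (Fin.castSucc u)).castPred (hsymcs u)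
      left_inv := by
        intro u
        apply Fin.castSucc_injective n
        rw [Fin.castSucc_castPred, Fin.castSucc_castPred, Equiv.symm_apply_apply]
      right_inv := by
        intro u
        apply Fin.castSucc_injective n
        rw [Fin.castSucc_castPred, Fin.castSucc_castPred, Equiv.apply_symm_apply] }
  have hεcs : ∀ u : Fin n, Fin.castSucc (ε u) = e' (Fin.castSucc u) := by
    intro u
    exact Fin.castSucc_castPred _ (he'cs u)
  have hXcond : ∀ u : Fin n, u ∈ A.X ↔ ε u ∈ B.X := by
    intro u
    rw [← cs_mem_SF (A := A), ← cs_mem_SF (A := B), ← hmemS₁ (Fin.castSucc u)]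
    rw [hSiff (g (Fin.castSucc u))]
    have : φ (g (Fin.castSucc u)) = e' (Fin.castSucc u) := rfl
    rw [this, ← hεcs u]
  have hmain : ∀ u w : Fin n, u ∈ A.X →
      (A.G.Adj u w ↔ B.G.Adj (ε u) (ε w)) := by
    intro u w hu
    by_cases hw : w ∈ A.X
    · constructor
      · intro hadj
        rcases A.bip u w hadj with ⟨-, h2⟩ | ⟨h1, -⟩
        · exact absurd hw h2
        · exact absurd hu h1
      · intro hadj
        rcases B.bip _ _ hadj with ⟨-, h2⟩ | ⟨h1, -⟩
        · exact absurd ((hXcond w).mp hw) h2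
        · exact absurd ((hXcond u).mp hu) h1
    · have step1 : A.G.Adj u w ↔ (F A).Adj (Fin.castSucc u) (Fin.castSucc w) := by
        rw [F_adj_cs_cs]
        exact ⟨Or.inr, fun h => h.elim (fun hh => absurd hu hh.1) id⟩
      have step2 : (F A).Adj (Fin.castSucc u) (Fin.castSucc w) ↔
          H.Adj (g (Fin.castSucc u)) (g (Fin.castSucc w)) := g.map_adj_iff.symm
      have hs : g (Fin.castSucc u) ∈ S₁ := (hmemS₁ _).mpr (cs_mem_SF.mpr hu)
      have hc : g (Fin.castSucc w) ∈ K₁ := (hmemK₁ _).mpr (cs_mem_KF.mpr hw)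
      have hck1 : g (Fin.castSucc w) ≠ k₁ := by
        intro h
        have := g.toEquiv.injective (by exact_mod_cast (h.trans hk₁def))
        exact (Fin.castSucc_lt_last w).ne this
      have step3 := hAdjiff (g (Fin.castSucc u)) hs (g (Fin.castSucc w)) hc hck1
      have hphi1 : φ (g (Fin.castSucc u)) = Fin.castSucc (ε u) := (hεcs u).symm
      have hphi2 : φ (g (Fin.castSucc w)) = Fin.castSucc (ε w) := (hεcs w).symm
      rw [hphi1, hphi2] at step3
      have step4 : H.Adj (Fin.castSucc (ε u)) (Fin.castSucc (ε w)) ↔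
          B.G.Adj (ε u) (ε w) := by
        rw [hH, F_adj_cs_cs]
        constructor
        · rintro (⟨h1, -, -⟩ | h)
          · exact absurd ((hXcond u).mp hu) h1
          · exact h
        · exact Or.inr
      rw [step1, step2, step3, step4]
  refine ⟨⟨ε, ?_⟩, hXcond⟩
  intro u w
  show B.G.Adj (ε u) (ε w) ↔ A.G.Adj u w
  constructor
  · intro hadj
    rcases B.bip _ _ hadj with ⟨h1, -⟩ | ⟨-, h2⟩
    · exact (hmain u w ((hXcond u).mpr h1)).mpr hadj
    · exact ((hmain w u ((hXcond w).mpr h2)).mpr hadj.symm).symm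
  · intro hadj
    rcases A.bip _ _ hadj with ⟨h1, -⟩ | ⟨-, h2⟩
    · exact (hmain u w h1).mp hadj
    · exact ((hmain w u h2).mp hadj.symm).symm

end XYF

/-- There is a bijection between isomorphism classes of XY-graphs on `n` vertices and
isomorphism classes of unbalanced split graphs on `n + 1` vertices. -/
theorem xy_unbalanced_split_bijection (n : ℕ) :
    Nonempty (Quot (XYIsoRel n) ≃ Quot (USplitIsoRel n)) := by
  classical
  let f : XYGraph n → {G : SimpleGraph (Fin (n + 1)) // IsSplit G ∧ ¬ IsBalanced G} :=
    fun A => ⟨XYF.F A, XYF.F_split A, XYF.F_unbal A⟩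
  have hcompat : ∀ A B : XYGraph n, XYIsoRel n A B → USplitIsoRel n (f A) (f B) :=
    fun A B h => XYF.F_congr h
  have husequiv : Equivalence (USplitIsoRel n) :=
    ⟨fun G => ⟨RelIso.refl _⟩,
     fun h => h.elim fun e => ⟨e.symm⟩,
     fun h1 h2 => h1.elim fun e1 => h2.elim fun e2 => ⟨e1.trans e2⟩⟩
  refine ⟨Equiv.ofBijective (Quot.map f hcompat) ⟨?_, ?_⟩⟩
  · have key : ∀ a b : XYGraph n,
        Quot.map f hcompat (Quot.mk (XYIsoRel n) a) = Quot.map f hcompat (Quot.mk (XYIsoRel n) b) →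
        Quot.mk (XYIsoRel n) a = Quot.mk (XYIsoRel n) b := by
      intro a b h
      have h' : Relation.EqvGen (USplitIsoRel n) (f a) (f b) := Quot.eq.mp h
      obtain ⟨e⟩ := (husequiv.eqvGen_iff).mp h'
      exact Quot.sound (XYF.F_inj e)
    intro q₁ q₂
    induction q₁ using Quot.ind
    induction q₂ using Quot.ind
    exact key _ _
  · intro q
    induction q using Quot.ind with
    | _ b =>
      obtain ⟨A, ⟨e⟩⟩ := XYF.F_surj b.1 b.2.1 b.2.2
      exact ⟨Quot.mk _ A, Quot.sound (⟨e⟩ : Nonempty (XYF.F A ≃g b.1))⟩
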